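/- Let a > 1, h ≥ 1 and ℓ ≥ 1 be integers. Then gcd(a^ℓ + 1, a^h − 1) equals 1 if h/gcd(ℓ,h) is odd and a is even; equals 2 if h/gcd(ℓ,h) is odd and a is odd; and equals a^{gcd(ℓ,h)} + 1 if h/gcd(ℓ,h) is even. -/

import Mathlib

lemma pow_eq_one_zmod {g b n : ℕ} (hn : 1 ≤ b ^ n) (h : g ∣ b ^ n - 1) :
    (b : ZMod g) ^ n = 1 := by
  have h0 : ((b ^ n - 1 : ℕ) : ZMod g) = 0 := (ZMod.natCast_eq_zero_iff _ _).mpr h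
  rw [Nat.cast_sub hn, Nat.cast_pow, Nat.cast_one, sub_eq_zero] at h0
  exact h0

lemma pow_eq_neg_one_zmod {g b m : ℕ} (h : g ∣ b ^ m + 1) :
    (b : ZMod g) ^ m = -1 := by
  have h0 : ((b ^ m + 1 : ℕ) : ZMod g) = 0 := (ZMod.natCast_eq_zero_iff _ _).mpr h
  push_cast at h0
  exact eq_neg_of_add_eq_zero_left h0

lemma key_gcd_lemma (b m n : ℕ) (hb : 1 < b) (hm : 1 ≤ m) (hn : 1 ≤ n)
    (hcop : Nat.Coprime m n) :
    (Odd n → Nat.gcd (b ^ m + 1) (b ^ n - 1) ∣ 2) ∧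
    (Even n → Nat.gcd (b ^ m + 1) (b ^ n - 1) = b + 1) := by
  set g := Nat.gcd (b ^ m + 1) (b ^ n - 1) with hg
  have hbn1 : 1 ≤ b ^ n := Nat.one_le_pow _ _ (by omega)
  have hgl : g ∣ b ^ m + 1 := Nat.gcd_dvd_left _ _
  have hgr : g ∣ b ^ n - 1 := Nat.gcd_dvd_right _ _
  have h1 : (b : ZMod g) ^ m = -1 := pow_eq_neg_one_zmod hgl
  have h2 : (b : ZMod g) ^ n = 1 := pow_eq_one_zmod hbn1 hgr
  have h2m : (b : ZMod g) ^ (2 * m) = 1 := by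
    rw [mul_comm, pow_mul, h1]; ring
  have hkey : (b : ZMod g) ^ Nat.gcd (2 * m) n = 1 := pow_gcd_eq_one.mpr ⟨h2m, h2⟩
  constructor
  · intro hodd
    have hcop2 : Nat.gcd (2 * m) n = 1 := Nat.Coprime.mul (hodd.coprime_two_left) hcop
    rw [hcop2, pow_one] at hkey
    rw [hkey, one_pow] at h1
    have h20 : ((2 : ℕ) : ZMod g) = 0 := by
      push_cast
      linear_combination h1
    exact (ZMod.natCast_eq_zero_iff _ _).mp h20
  · intro heven
    obtain ⟨k, hk⟩ := heven
    have hk' : n = 2 * k := by omega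
    have hmodd : Odd m := by
      rcases Nat.even_or_odd m with he | ho
      · exfalso
        obtain ⟨j, hj⟩ := he
        have h2m : 2 ∣ m := ⟨j, by omega⟩
        have h2n : 2 ∣ n := ⟨k, hk'⟩
        have := Nat.dvd_gcd h2m h2n
        rw [hcop] at this
        omega
      · exact ho
    -- gcd (2*m) n = 2
    have hgcd2 : Nat.gcd (2 * m) n = 2 := by
      rw [hk', Nat.gcd_mul_left]
      have : Nat.gcd m k = 1 := Nat.Coprime.coprime_dvd_right ⟨2, by omega⟩ hcop
      rw [this, mul_one]
    rw [hgcd2] at hkey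
    -- b^m = b in ZMod g since m odd and b^2 = 1
    obtain ⟨j, hj⟩ := id hmodd
    have hbm : (b : ZMod g) ^ m = b := by
      rw [hj, pow_add, pow_mul, hkey, one_pow, one_mul, pow_one]
    clear hj
    rw [hbm] at h1
    have hbp1 : ((b + 1 : ℕ) : ZMod g) = 0 := by
      push_cast
      linear_combination h1
    have hdvd1 : g ∣ b + 1 := (ZMod.natCast_eq_zero_iff _ _).mp hbp1
    -- b + 1 ∣ g
    have hd1 : b + 1 ∣ b ^ m + 1 := by
      have := Odd.nat_add_dvd_pow_add_pow b 1 hmodd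
      simpa using this
    have hd2 : b + 1 ∣ b ^ n - 1 := by
      have hsq : b + 1 ∣ b ^ 2 - 1 := by
        obtain ⟨c, rfl⟩ : ∃ c, b = c + 2 := ⟨b - 2, by omega⟩
        refine ⟨c + 1, ?_⟩
        have h1 : (c + 2) ^ 2 = c ^ 2 + 4 * c + 4 := by ring
        have h2 : (c + 2 + 1) * (c + 1) = c ^ 2 + 4 * c + 3 := by ring
        omega
      have hpow : b ^ 2 - 1 ∣ b ^ n - 1 := by
        have := Nat.sub_dvd_pow_sub_pow (b ^ 2) 1 k
        simpa [← pow_mul, ← hk', one_pow] using this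
      exact hsq.trans hpow
    exact Nat.dvd_antisymm hdvd1 (Nat.dvd_gcd hd1 hd2)

/-- Lemma 3 (number theory): value of gcd(a^ℓ + 1, a^h − 1). -/
theorem gcd_pow_add_one_pow_sub_one (a h ℓ : ℕ) (ha : 1 < a) (hh : 1 ≤ h) (hℓ : 1 ≤ ℓ) :
    (Odd (h / Nat.gcd ℓ h) → Even a → Nat.gcd (a ^ ℓ + 1) (a ^ h - 1) = 1) ∧
    (Odd (h / Nat.gcd ℓ h) → Odd a → Nat.gcd (a ^ ℓ + 1) (a ^ h - 1) = 2) ∧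
    (Even (h / Nat.gcd ℓ h) → Nat.gcd (a ^ ℓ + 1) (a ^ h - 1) = a ^ Nat.gcd ℓ h + 1) := by
  set d := Nat.gcd ℓ h with hd
  have hdpos : 0 < d := Nat.gcd_pos_of_pos_left _ (by omega)
  have hdl : d ∣ ℓ := Nat.gcd_dvd_left _ _
  have hdr : d ∣ h := Nat.gcd_dvd_right _ _
  set m := ℓ / d with hmdef
  set n := h / d with hndef
  have hℓeq : ℓ = d * m := (Nat.mul_div_cancel' hdl).symm
  have hheq : h = d * n := (Nat.mul_div_cancel' hdr).symm
  have hm : 1 ≤ m := Nat.div_pos (Nat.le_of_dvd (by omega) hdl) hdpos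
  have hn : 1 ≤ n := Nat.div_pos (Nat.le_of_dvd (by omega) hdr) hdpos
  have hcop : Nat.Coprime m n := Nat.coprime_div_gcd_div_gcd hdpos
  have hb : 1 < a ^ d := Nat.one_lt_pow (by omega) ha
  have hrw1 : a ^ ℓ = (a ^ d) ^ m := by rw [hℓeq, pow_mul]
  have hrw2 : a ^ h = (a ^ d) ^ n := by rw [hheq, pow_mul]
  obtain ⟨hodd_case, heven_case⟩ := key_gcd_lemma (a ^ d) m n hb hm hn hcop
  rw [hrw1, hrw2]
  refine ⟨?_, ?_, ?_⟩
  · intro ho hae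
    have hg2 : Nat.gcd ((a ^ d) ^ m + 1) ((a ^ d) ^ n - 1) ∣ 2 := hodd_case ho
    have hbe : Even ((a ^ d) ^ m) := Nat.even_pow.mpr ⟨Nat.even_pow.mpr ⟨hae, by omega⟩, by omega⟩
    have hodd1 : Odd ((a ^ d) ^ m + 1) := by
      rcases hbe with ⟨j, hj⟩; exact ⟨j, by omega⟩
    rcases (Nat.dvd_prime Nat.prime_two).mp hg2 with h1 | h1
    · exact h1
    · exfalso
      have := Nat.gcd_dvd_left ((a ^ d) ^ m + 1) ((a ^ d) ^ n - 1)
      rw [h1] at this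
      rcases hodd1 with ⟨j, hj⟩
      omega
  · intro ho hao
    have hg2 : Nat.gcd ((a ^ d) ^ m + 1) ((a ^ d) ^ n - 1) ∣ 2 := hodd_case ho
    have hbo : Odd ((a ^ d) ^ m) := (hao.pow).pow
    have hbno : Odd ((a ^ d) ^ n) := (hao.pow).pow
    have h2l : 2 ∣ (a ^ d) ^ m + 1 := by rcases hbo with ⟨j, hj⟩; omega
    have h2r : 2 ∣ (a ^ d) ^ n - 1 := by rcases hbno with ⟨j, hj⟩; omega
    exact Nat.dvd_antisymm hg2 (Nat.dvd_gcd h2l h2r)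
  · intro he
    exact heven_case he
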